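/- With the notation above, for any real polynomial f, the smallest (*)-closed set χ(f) containing f is finite. -/

import Mathlib

open Polynomial

def StarClosed (m : ℕ → ℝ) (χ : Set (Polynomial ℝ)) : Prop :=
  (∀ g ∈ χ, ∀ i : ℕ, i ≤ g.natDegree → derivative^[i] g ∈ χ) ∧
  (∀ g ∈ χ, (∑ i ∈ Finset.Icc 1 g.natDegree, C (m i) * derivative^[i] g) ∈ χ)

lemma exists_finite_starClosed (m : ℕ → ℝ) :
    ∀ n : ℕ, ∀ f : Polynomial ℝ, f.natDegree ≤ n →
      ∃ χ : Set (Polynomial ℝ), χ.Finite ∧ StarClosed m χ ∧ f ∈ χ := by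
  intro n
  induction n using Nat.strong_induction_on with
  | _ n IH =>
    intro f hf
    by_cases hN : f.natDegree = 0
    · refine ⟨{f, 0}, (Set.finite_singleton 0).insert f, ⟨?_, ?_⟩, by simp⟩
      · intro g hg i hi
        have hg0 : g.natDegree = 0 := by
          rcases hg with h | h
          · simp [h, hN]
          · simp at h; simp [h]
        rw [hg0] at hi
        interval_cases i
        simpa using hg
      · intro g hg
        have hg0 : g.natDegree = 0 := by
          rcases hg with h | h
          · simp [h, hN]
          · simp at h; simp [h]
        simp [hg0]
    · set N := f.natDegree with hNdef
      have hN1 : 1 ≤ N := Nat.one_le_iff_ne_zero.mpr hN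
      have hNn : N ≤ n := hf
      have hlt : N - 1 < n := by omega
      -- derivatives
      have hder : ∀ j : ℕ, (derivative^[j + 1] f).natDegree ≤ N - 1 := by
        intro j
        calc (derivative^[j + 1] f).natDegree ≤ N - (j + 1) :=
              natDegree_iterate_derivative f (j + 1)
          _ ≤ N - 1 := by omega
      have hc : ∀ j : ℕ, ∃ χ : Set (Polynomial ℝ), χ.Finite ∧ StarClosed m χ ∧
          derivative^[j + 1] f ∈ χ := fun j => IH (N - 1) hlt _ (hder j)
      choose c hcfin hcstar hcmem using hc
      -- the sum
      have hsum : (∑ i ∈ Finset.Icc 1 N, C (m i) * derivative^[i] f).natDegree ≤ N - 1 := by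
        refine natDegree_sum_le_of_forall_le _ _ ?_
        intro i hi
        simp only [Finset.mem_Icc] at hi
        calc (C (m i) * derivative^[i] f).natDegree ≤ (derivative^[i] f).natDegree :=
              natDegree_C_mul_le _ _
          _ ≤ N - i := natDegree_iterate_derivative f i
          _ ≤ N - 1 := by omega
      obtain ⟨χs, hsfin, hsstar, hsmem⟩ := IH (N - 1) hlt _ hsum
      refine ⟨insert f (χs ∪ ⋃ j ∈ Finset.range N, c j), ?_, ⟨?_, ?_⟩, by simp⟩
      · exact ((hsfin.union ((Finset.range N).finite_toSet.biUnion fun j _ => hcfin j)).insert f)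
      · intro g hg i hi
        rcases hg with rfl | hg | hg
        · rcases Nat.eq_zero_or_pos i with rfl | hipos
          · simp
          · right; right
            refine Set.mem_biUnion (by simp; omega : (i - 1 : ℕ) ∈ (Finset.range N : Set ℕ)) ?_
            have : i - 1 + 1 = i := by omega
            rw [← this]
            exact hcmem (i - 1)
        · exact Or.inr (Or.inl (hsstar.1 g hg i hi))
        · obtain ⟨j, hj, hgj⟩ := Set.mem_iUnion₂.mp hg
          exact Or.inr (Or.inr (Set.mem_biUnion hj ((hcstar j).1 g hgj i hi)))
      · intro g hg
        rcases hg with rfl | hg | hg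
        · exact Or.inr (Or.inl hsmem)
        · exact Or.inr (Or.inl (hsstar.2 g hg))
        · obtain ⟨j, hj, hgj⟩ := Set.mem_iUnion₂.mp hg
          exact Or.inr (Or.inr (Set.mem_biUnion hj ((hcstar j).2 g hgj)))

theorem stmt_10 (m : ℕ → ℝ) (f : Polynomial ℝ) :
    (⋂₀ {χ : Set (Polynomial ℝ) | StarClosed m χ ∧ f ∈ χ}).Finite := by
  obtain ⟨χ, hfin, hstar, hmem⟩ := exists_finite_starClosed m f.natDegree f le_rfl
  exact hfin.subset (Set.sInter_subset_of_mem ⟨hstar, hmem⟩)
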